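/- arXiv:2105.04005 — 2 statements merged into one kernel-verified Lean document; each statement's English description precedes it below -/
import Mathlib

section
/- Let Q, g ∈ ℝ with Q ≥ 0 and γ > 0, and set Q' = max{-γg, Q + γg}. Then (1/2)(Q')² - (1/2)Q² ≤ γQg + (γg)². -/
/-- Per-coordinate Lyapunov drift bound for the DTC-OCO virtual queue update:
with `Q ≥ 0`, `γ > 0` and `Q' = max{-γg, Q + γg}`,
`(1/2)(Q')² - (1/2)Q² ≤ γQg + (γg)²`. -/
theorem stmt_1 (Q g γ : ℝ) (hQ : 0 ≤ Q) (hγ : 0 < γ) :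
    (1 / 2) * (max (-(γ * g)) (Q + γ * g)) ^ 2 - (1 / 2) * Q ^ 2
      ≤ γ * Q * g + (γ * g) ^ 2 := by
  rcases max_cases (-(γ * g)) (Q + γ * g) with ⟨h, _⟩ | ⟨h, _⟩ <;> rw [h] <;>
    nlinarith [sq_nonneg (Q + γ * g), sq_nonneg (γ * g)]
end

section
/- Let Q ∈ ℝ^C with Q ⪰ 0 componentwise, g ∈ ℝ^C, γ > 0, and define Q'_c = max{-γ g_c, Q_c + γ g_c} for each c. Then (1/2)‖Q'‖₂² - (1/2)‖Q‖₂² ≤ γ ⟨Q, g⟩ + ‖γ g‖₂². -/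
open RealInnerProductSpace

lemma norm_sq_euc {C : ℕ} (x : EuclideanSpace ℝ (Fin C)) :
    ‖x‖ ^ 2 = ∑ c, x c ^ 2 := by
  rw [EuclideanSpace.norm_eq, Real.sq_sqrt (by positivity)]
  simp [sq_abs]

/-- Vector Lyapunov drift bound for the DTC-OCO virtual queue update:
`(1/2)‖Q'‖₂² - (1/2)‖Q‖₂² ≤ γ⟨Q, g⟩ + ‖γg‖₂²`. -/
theorem stmt_2 {C : ℕ} (Q g Q' : EuclideanSpace ℝ (Fin C)) (γ : ℝ)
    (hγ : 0 < γ) (hQ : ∀ c, 0 ≤ Q c)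
    (hQ' : ∀ c, Q' c = max (-(γ * g c)) (Q c + γ * g c)) :
    (1 / 2) * ‖Q'‖ ^ 2 - (1 / 2) * ‖Q‖ ^ 2 ≤ γ * ⟪Q, g⟫ + ‖γ • g‖ ^ 2 := by
  have hip : ⟪Q, g⟫ = ∑ c, Q c * g c := by
    simp [PiLp.inner_apply, mul_comm]
  rw [norm_sq_euc, norm_sq_euc, norm_sq_euc, hip, Finset.mul_sum, Finset.mul_sum]
  rw [Finset.mul_sum, ← Finset.sum_add_distrib, ← Finset.sum_sub_distrib]
  apply Finset.sum_le_sum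
  intro c _
  have h1 := hQ' c
  have h2 := hQ c
  have hsq : Q' c ^ 2 ≤ (γ * g c) ^ 2 + (Q c + γ * g c) ^ 2 := by
    rcases max_cases (-(γ * g c)) (Q c + γ * g c) with ⟨he, _⟩ | ⟨he, _⟩ <;>
      rw [h1, he] <;> nlinarith [sq_nonneg (γ * g c), sq_nonneg (Q c + γ * g c)]
  simp only [PiLp.smul_apply, smul_eq_mul]
  nlinarith
end
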